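/- Let P1, P2 > 0, a ∈ ℝ, and α ∈ [0,1). Then (1/2)·log(1 + P1 + a²·P2 + 2·|a|·√(α·P1·P2)) ≥ (1/2)·log(1 + (1−α)·P2/(1 + α·P2)) + (1/2)·log(1 + (√P1 + |a|·√(α·P2))²) holds if and only if |a| ≥ √(α·P1·P2) + √(1 + P1 + α·P1·P2). (log denotes the natural logarithm.) -/

import Mathlib

theorem stmt_7 (P1 P2 : ℝ) (hP1 : 0 < P1) (hP2 : 0 < P2) (a : ℝ) (α : ℝ)
    (hα : α ∈ Set.Ico (0 : ℝ) 1) :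
    (1 / 2) * Real.log (1 + P1 + a ^ 2 * P2 + 2 * |a| * Real.sqrt (α * P1 * P2)) ≥
        (1 / 2) * Real.log (1 + (1 - α) * P2 / (1 + α * P2)) +
          (1 / 2) * Real.log (1 + (Real.sqrt P1 + |a| * Real.sqrt (α * P2)) ^ 2) ↔
      |a| ≥ Real.sqrt (α * P1 * P2) + Real.sqrt (1 + P1 + α * P1 * P2) := by
  obtain ⟨hα0, hα1⟩ := hα
  set t := |a| with htdef
  have ht0 : 0 ≤ t := abs_nonneg a
  have ha2 : a ^ 2 = t ^ 2 := (sq_abs a).symm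
  set s := Real.sqrt (α * P1 * P2) with hsdef
  set r := Real.sqrt (1 + P1 + α * P1 * P2) with hrdef
  have hαP1P2 : 0 ≤ α * P1 * P2 := by positivity
  have hs0 : 0 ≤ s := Real.sqrt_nonneg _
  have hr0 : 0 ≤ r := Real.sqrt_nonneg _
  have hs2 : s ^ 2 = α * P1 * P2 := Real.sq_sqrt hαP1P2
  have hr2 : r ^ 2 = 1 + P1 + α * P1 * P2 := Real.sq_sqrt (by positivity)
  have hrs : s < r := by nlinarith
  set u := Real.sqrt (α * P2) with hudef
  have hu0 : 0 ≤ u := Real.sqrt_nonneg _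
  have hu2 : u ^ 2 = α * P2 := Real.sq_sqrt (by positivity)
  set p := Real.sqrt P1 with hpdef
  have hp0 : 0 ≤ p := Real.sqrt_nonneg _
  have hp2 : p ^ 2 = P1 := Real.sq_sqrt hP1.le
  have hspu : s = p * u := by
    rw [hsdef, hpdef, hudef, show α * P1 * P2 = P1 * (α * P2) by ring,
      Real.sqrt_mul hP1.le]
  clear_value t s r u p
  have hd : (0:ℝ) < 1 + α * P2 := by nlinarith
  have hL1 : 1 + (1 - α) * P2 / (1 + α * P2) = (1 + P2) / (1 + α * P2) := by
    field_simp; ring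
  have hL1pos : (0:ℝ) < (1 + P2) / (1 + α * P2) := by positivity
  have hL2pos : (0:ℝ) < 1 + (p + t * u) ^ 2 := by positivity
  have hL0pos : (0:ℝ) < 1 + P1 + a ^ 2 * P2 + 2 * t * s := by nlinarith
  rw [hL1, ge_iff_le, ← mul_add,
    ← Real.log_mul (ne_of_gt hL1pos) (ne_of_gt hL2pos),
    mul_le_mul_iff_right₀ (by norm_num : (0:ℝ) < 1/2),
    Real.log_le_log_iff (by positivity) hL0pos,
    div_mul_eq_mul_div, div_le_iff₀ hd]
  have hkey : (1 + P1 + a ^ 2 * P2 + 2 * t * s) * (1 + α * P2) -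
      (1 + P2) * (1 + (p + t * u) ^ 2) =
      (P2 - u ^ 2) * (t ^ 2 - 2 * t * s - (1 + P1)) := by
    rw [ha2, hspu]
    linear_combination (-(1 + P2)) * hp2 - (1 + P1 + P2 * t ^ 2 + 2 * t * p * u) * hu2
  have hP2u : 0 < P2 - u ^ 2 := by
    rw [hu2]; nlinarith
  constructor
  · intro h
    have hprod : 0 ≤ (P2 - u ^ 2) * (t ^ 2 - 2 * t * s - (1 + P1)) := by linarith
    rw [mul_comm] at hprod
    have hq : t ^ 2 - 2 * t * s - (1 + P1) ≥ 0 :=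
      nonneg_of_mul_nonneg_left hprod hP2u
    by_contra hc
    push_neg at hc
    have h1 : r ^ 2 ≤ (t - s) ^ 2 := by
      have e : (t - s) ^ 2 = t ^ 2 - 2 * t * s + s ^ 2 := by ring
      rw [e, hs2, hr2]; linarith
    have h3 : t - s + r ≤ 0 := by
      by_contra h4
      push_neg at h4
      have h5 := mul_pos (show (0:ℝ) < r - (t - s) by linarith) h4
      have e2 : (r - (t - s)) * (t - s + r) = r ^ 2 - (t - s) ^ 2 := by ring
      linarith
    linarith
  · intro h
    have hq : t ^ 2 - 2 * t * s - (1 + P1) ≥ 0 := by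
      have hm := mul_nonneg (by linarith : (0:ℝ) ≤ t - s - r)
        (by linarith : (0:ℝ) ≤ t - s + r)
      have e : (t - s - r) * (t - s + r) = t ^ 2 - 2 * t * s + s ^ 2 - r ^ 2 := by
        ring
      linarith [hm, e, hs2, hr2]
    linarith [mul_nonneg hP2u.le hq, hkey]
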